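/- Let 𝒞 be a finite set of constructive formulas and let G = CK+𝒞 be either T-free or T-full. Then the logic of G admits all Visser's rules: for any finite (possibly empty) family of formulas {(A_i, B_i)}_{i∈I} and any formulas C, D, if G proves (⇒ ⋀_{i∈I}(A_i → B_i) → (C ∨ D)), then G proves (⇒ ⋀_{i∈I}(A_i → B_i) → C), or (⇒ ⋀_{i∈I}(A_i → B_i) → D), or (⇒ ⋀_{i∈I}(A_i → B_i) → A_i) for some i ∈ I. In particular (taking I = ∅), if G proves (⇒ C ∨ D) then G proves (⇒ C) or (⇒ D). -/

import Mathlib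

set_option autoImplicit false

namespace UPT

/-- Modal formulas over atoms of type `α` (the language `ℒ = {∧,∨,→,⊤,⊥,□,◇}`). -/
inductive Fml (α : Type) : Type where
  | atom : α → Fml α
  | top  : Fml α
  | bot  : Fml α
  | and  : Fml α → Fml α → Fml α
  | or   : Fml α → Fml α → Fml α
  | imp  : Fml α → Fml α → Fml α
  | box  : Fml α → Fml α
  | dia  : Fml α → Fml α
deriving DecidableEq

variable {α β : Type}

/-- Simultaneous substitution of formulas for atoms. -/
def Fml.subst (σ : β → Fml α) : Fml β → Fml α
  | .atom b  => σ b
  | .top     => .top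
  | .bot     => .bot
  | .and A B => .and (A.subst σ) (B.subst σ)
  | .or A B  => .or (A.subst σ) (B.subst σ)
  | .imp A B => .imp (A.subst σ) (B.subst σ)
  | .box A   => .box (A.subst σ)
  | .dia A   => .dia (A.subst σ)

/-- A sequent: a finite multiset antecedent together with a succedent
containing at most one formula. -/
abbrev Seq (α : Type) : Type := Multiset (Fml α) × Option (Fml α)

/-- A rule set relates a (finite) list of premise sequents to a conclusion sequent. -/
abbrev RuleSet (α : Type) : Type := List (Seq α) → Seq α → Prop

/-- The axioms and rules of the single-conclusion sequent calculus `LJ`, stated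
schematically: they are closed under substituting arbitrary formulas for atoms
and arbitrary multisets (resp. succedents) for the context variables. -/
inductive LJRule : List (Seq α) → Seq α → Prop where
  | id (Γ : Multiset (Fml α)) (A : Fml α) : LJRule [] (A ::ₘ Γ, some A)
  | botL (Γ : Multiset (Fml α)) (Δ : Option (Fml α)) : LJRule [] (.bot ::ₘ Γ, Δ)
  | topR (Γ : Multiset (Fml α)) : LJRule [] (Γ, some .top)
  | wL (A : Fml α) (Γ : Multiset (Fml α)) (Δ : Option (Fml α)) :
      LJRule [(Γ, Δ)] (A ::ₘ Γ, Δ)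
  | wR (A : Fml α) (Γ : Multiset (Fml α)) : LJRule [(Γ, none)] (Γ, some A)
  | cL (A : Fml α) (Γ : Multiset (Fml α)) (Δ : Option (Fml α)) :
      LJRule [(A ::ₘ A ::ₘ Γ, Δ)] (A ::ₘ Γ, Δ)
  | cut (A : Fml α) (Γ : Multiset (Fml α)) (Δ : Option (Fml α)) :
      LJRule [(Γ, some A), (A ::ₘ Γ, Δ)] (Γ, Δ)
  | andL₁ (A B : Fml α) (Γ : Multiset (Fml α)) (Δ : Option (Fml α)) :
      LJRule [(A ::ₘ Γ, Δ)] (.and A B ::ₘ Γ, Δ)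
  | andL₂ (A B : Fml α) (Γ : Multiset (Fml α)) (Δ : Option (Fml α)) :
      LJRule [(B ::ₘ Γ, Δ)] (.and A B ::ₘ Γ, Δ)
  | andR (A B : Fml α) (Γ : Multiset (Fml α)) :
      LJRule [(Γ, some A), (Γ, some B)] (Γ, some (.and A B))
  | orL (A B : Fml α) (Γ : Multiset (Fml α)) (Δ : Option (Fml α)) :
      LJRule [(A ::ₘ Γ, Δ), (B ::ₘ Γ, Δ)] (.or A B ::ₘ Γ, Δ)
  | orR₁ (A B : Fml α) (Γ : Multiset (Fml α)) : LJRule [(Γ, some A)] (Γ, some (.or A B))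
  | orR₂ (A B : Fml α) (Γ : Multiset (Fml α)) : LJRule [(Γ, some B)] (Γ, some (.or A B))
  | impL (A B : Fml α) (Γ : Multiset (Fml α)) (Δ : Option (Fml α)) :
      LJRule [(Γ, some A), (B ::ₘ Γ, Δ)] (.imp A B ::ₘ Γ, Δ)
  | impR (A B : Fml α) (Γ : Multiset (Fml α)) :
      LJRule [(A ::ₘ Γ, some B)] (Γ, some (.imp A B))

/-- The rule `K_□`: from `Γ ⇒ A` infer `□Γ ⇒ □A`. -/
inductive KBoxRule : List (Seq α) → Seq α → Prop where
  | mk (Γ : Multiset (Fml α)) (A : Fml α) :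
      KBoxRule [(Γ, some A)] (Γ.map Fml.box, some (.box A))

/-- The rule `K_◇`: from `Γ, A ⇒ B` infer `□Γ, ◇A ⇒ ◇B`. -/
inductive KDiaRule : List (Seq α) → Seq α → Prop where
  | mk (Γ : Multiset (Fml α)) (A B : Fml α) :
      KDiaRule [(A ::ₘ Γ, some B)] (.dia A ::ₘ Γ.map Fml.box, some (.dia B))

/-- The rule `◇L`: from `Γ, A ⇒ B` infer `Γ, ◇A ⇒ ◇B`. -/
inductive DiaLRule : List (Seq α) → Seq α → Prop where
  | mk (Γ : Multiset (Fml α)) (A B : Fml α) :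
      DiaLRule [(A ::ₘ Γ, some B)] (.dia A ::ₘ Γ, some (.dia B))

/-- Adding a set `Ax` of axioms to a calculus: the initial sequents `⇒ σ(A)`
for every substitution instance `σ(A)` of every `A ∈ Ax`. -/
def axRule (Ax : Fml α → Prop) : RuleSet α := fun ps c =>
  ps = [] ∧ ∃ (A : Fml α) (σ : α → Fml α), Ax A ∧ c = ((0 : Multiset (Fml α)), some (A.subst σ))

/-- Using a set of sequents as additional initial sequents (assumptions). -/
def hypRule (H : Set (Seq α)) : RuleSet α := fun ps c => ps = [] ∧ c ∈ H

/-- The sequent calculus `LJ+Ax`. -/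
def LJSys (Ax : Fml α → Prop) : RuleSet α := fun ps c => LJRule ps c ∨ axRule Ax ps c

/-- The sequent calculus `CK+Ax = LJ + K_□ + K_◇ + Ax`. -/
def CKSys (Ax : Fml α → Prop) : RuleSet α := fun ps c =>
  LJRule ps c ∨ KBoxRule ps c ∨ KDiaRule ps c ∨ axRule Ax ps c

/-- The sequent calculus `CK_□+Ax = LJ + K_□ + Ax`. -/
def CKBoxSys (Ax : Fml α → Prop) : RuleSet α := fun ps c =>
  LJRule ps c ∨ KBoxRule ps c ∨ axRule Ax ps c

/-- The sequent calculus `BLL+Ax = LJ + ◇L + Ax`. -/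
def BLLSys (Ax : Fml α → Prop) : RuleSet α := fun ps c =>
  LJRule ps c ∨ DiaLRule ps c ∨ axRule Ax ps c

/-- Provability of a sequent in the calculus generated by a rule set. -/
inductive Derives (R : RuleSet α) : Multiset (Fml α) → Option (Fml α) → Prop where
  | step {ps : List (Seq α)} {c : Seq α} (hr : R ps c)
      (hp : ∀ p ∈ ps, Derives R p.1 p.2) : Derives R c.1 c.2

/-- Basic formulas: generated from atoms, `⊤`, `⊥` by `∧`, `∨`, `◇`. -/
inductive Basic : Fml α → Prop where
  | atom (a : α) : Basic (.atom a)
  | top : Basic (.top : Fml α)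
  | bot : Basic (.bot : Fml α)
  | and {A B : Fml α} : Basic A → Basic B → Basic (.and A B)
  | or {A B : Fml α} : Basic A → Basic B → Basic (.or A B)
  | dia {A : Fml α} : Basic A → Basic (.dia A)

/-- Almost positive formulas: generated from basic formulas by `∧`, `∨`, `□`, `◇`
and implications `A → B` with `A` basic and `B` almost positive. -/
inductive AlmostPos : Fml α → Prop where
  | basic {A : Fml α} : Basic A → AlmostPos A
  | and {A B : Fml α} : AlmostPos A → AlmostPos B → AlmostPos (.and A B)
  | or {A B : Fml α} : AlmostPos A → AlmostPos B → AlmostPos (.or A B)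
  | box {A : Fml α} : AlmostPos A → AlmostPos (.box A)
  | dia {A : Fml α} : AlmostPos A → AlmostPos (.dia A)
  | imp {A B : Fml α} : Basic A → AlmostPos B → AlmostPos (.imp A B)

/-- Constructive formulas: generated from basic formulas by `∧`, `□` and
implications `A → B` with `A` almost positive and `B` constructive. -/
inductive Constructive : Fml α → Prop where
  | basic {A : Fml α} : Basic A → Constructive A
  | and {A B : Fml α} : Constructive A → Constructive B → Constructive (.and A B)
  | box {A : Fml α} : Constructive A → Constructive (.box A)
  | imp {A B : Fml α} : AlmostPos A → Constructive B → Constructive (.imp A B)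

/-- Harrop formulas: atoms, `⊥`, `⊤`, closed under `∧`, `□`, and implications
`A → B` with `A` arbitrary and `B` Harrop. -/
inductive Harrop : Fml α → Prop where
  | atom (a : α) : Harrop (.atom a)
  | top : Harrop (.top : Fml α)
  | bot : Harrop (.bot : Fml α)
  | and {A B : Fml α} : Harrop A → Harrop B → Harrop (.and A B)
  | box {A : Fml α} : Harrop A → Harrop (.box A)
  | imp (A : Fml α) {B : Fml α} : Harrop B → Harrop (.imp A B)

/-- Conjunction of a list of formulas (`⋀∅ = ⊤`). -/
def conj : List (Fml α) → Fml α
  | [] => .top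
  | [A] => A
  | A :: B :: l => .and A (conj (B :: l))

/-- Disjunction of a list of formulas (`⋁∅ = ⊥`). -/
def disj : List (Fml α) → Fml α
  | [] => .bot
  | [A] => A
  | A :: B :: l => .or A (disj (B :: l))

/-- Disjunction of a succedent (at most one formula; `⋁∅ = ⊥`). -/
def odisj : Option (Fml α) → Fml α
  | none => .bot
  | some A => A

/-- The multiset `{A_i → B_i}_{i ∈ I}` of implications of an indexed family. -/
def imps (AB : List (Fml α × Fml α)) : Multiset (Fml α) :=
  ↑(AB.map fun p => Fml.imp p.1 p.2)

/-- The conjunction `⋀_{i∈I} (A_i → B_i)` of an indexed family of implications. -/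
def impConj (AB : List (Fml α × Fml α)) : Fml α :=
  conj (AB.map fun p => Fml.imp p.1 p.2)

/-- Truth in the one-node *irreflexive* frame `𝒦ᵢ` under a Boolean valuation:
`□A` is always true and `◇A` is always false; the propositional connectives
are evaluated classically. -/
def evalI (v : α → Bool) : Fml α → Bool
  | .atom a  => v a
  | .top     => true
  | .bot     => false
  | .and A B => evalI v A && evalI v B
  | .or A B  => evalI v A || evalI v B
  | .imp A B => !evalI v A || evalI v B
  | .box _   => true
  | .dia _   => false

/-- Truth in the one-node *reflexive* frame `𝒦ᵣ` under a Boolean valuation: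
`□A` and `◇A` take the value of `A`. -/
def evalR (v : α → Bool) : Fml α → Bool
  | .atom a  => v a
  | .top     => true
  | .bot     => false
  | .and A B => evalR v A && evalR v B
  | .or A B  => evalR v A || evalR v B
  | .imp A B => !evalR v A || evalR v B
  | .box A   => evalR v A
  | .dia A   => evalR v A

/-- Validity of a sequent with respect to a one-node semantics: under every
valuation, if all formulas of the antecedent are true then so is the succedent. -/
def SeqValid (ev : (α → Bool) → Fml α → Bool) (Γ : Multiset (Fml α)) (Δ : Option (Fml α)) :
    Prop :=
  ∀ v : α → Bool, (∀ A ∈ Γ, ev v A = true) → ∃ B ∈ Δ, ev v B = true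

/-- `CK+Ax` is T-free: every provable sequent is valid in the irreflexive node frame. -/
def TFree (Ax : Fml α → Prop) : Prop :=
  ∀ (Γ : Multiset (Fml α)) (Δ : Option (Fml α)), Derives (CKSys Ax) Γ Δ → SeqValid evalI Γ Δ

/-- `CK+Ax` is T-full: every provable sequent is valid in the reflexive node
frame and the calculus proves `⇒ □p → p` and `⇒ p → ◇p`. -/
def TFull (Ax : Fml α → Prop) : Prop :=
  (∀ (Γ : Multiset (Fml α)) (Δ : Option (Fml α)), Derives (CKSys Ax) Γ Δ → SeqValid evalR Γ Δ) ∧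
  (∀ a : α, Derives (CKSys Ax) 0 (some (.imp (.box (.atom a)) (.atom a)))) ∧
  (∀ a : α, Derives (CKSys Ax) 0 (some (.imp (.atom a) (.dia (.atom a)))))

/-- Classical validity of a (modality-free) sequent: `⋀Γ → ⋁Δ` is true under
every Boolean valuation of the atoms. -/
def ClValid (Γ : Multiset (Fml α)) (Δ : Option (Fml α)) : Prop :=
  ∀ v : α → Bool, (∀ A ∈ Γ, evalI v A = true) → ∃ B ∈ Δ, evalI v B = true

/-- Nonempty conjunctions of atoms. -/
inductive AtomConj : Fml α → Prop where
  | single (a : α) : AtomConj (.atom a)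
  | and {A B : Fml α} : AtomConj A → AtomConj B → AtomConj (.and A B)

/-- Implicational Horn formulas: `⊥`, atoms, and implications `⋀Q → r` with `Q`
a nonempty multiset of atoms and `r` an atom or `⊥`. -/
inductive ImpHorn : Fml α → Prop where
  | bot : ImpHorn (.bot : Fml α)
  | atom (a : α) : ImpHorn (.atom a)
  | impAtom {A : Fml α} (hA : AtomConj A) (a : α) : ImpHorn (.imp A (.atom a))
  | impBot {A : Fml α} (hA : AtomConj A) : ImpHorn (.imp A .bot)

/-- Formulas of the form `◇^n p` with `p` an atom and `n ≥ 0`. -/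
inductive DiaPowAtom : Fml α → Prop where
  | atom (a : α) : DiaPowAtom (.atom a)
  | dia {A : Fml α} : DiaPowAtom A → DiaPowAtom (.dia A)

/-- Nonempty conjunctions `⋀_{i=1}^k ◇^{n_i} p_i` of formulas `◇^{n_i} p_i`. -/
inductive DiaConj : Fml α → Prop where
  | single {A : Fml α} : DiaPowAtom A → DiaConj A
  | and {A B : Fml α} : DiaConj A → DiaConj B → DiaConj (.and A B)

/-- Modal Horn formulas: `⊥` and atoms, closed under `□` and under implications
`A → B` with `A = ⋀_{i=1}^k ◇^{n_i} p_i` and `B` modal Horn. -/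
inductive ModalHorn : Fml α → Prop where
  | bot : ModalHorn (.bot : Fml α)
  | atom (a : α) : ModalHorn (.atom a)
  | box {A : Fml α} : ModalHorn A → ModalHorn (.box A)
  | imp {A B : Fml α} : DiaConj A → ModalHorn B → ModalHorn (.imp A B)

/-- The predicate "all atoms of the formula satisfy `P`". -/
def Fml.AtomsIn (P : α → Prop) : Fml α → Prop
  | .atom a  => P a
  | .top     => True
  | .bot     => True
  | .and A B => A.AtomsIn P ∧ B.AtomsIn P
  | .or A B  => A.AtomsIn P ∧ B.AtomsIn P
  | .imp A B => A.AtomsIn P ∧ B.AtomsIn P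
  | .box A   => A.AtomsIn P
  | .dia A   => A.AtomsIn P

/-- No `◇` occurs in the formula. -/
def Fml.DiaFree : Fml α → Prop
  | .atom _  => True
  | .top     => True
  | .bot     => True
  | .and A B => A.DiaFree ∧ B.DiaFree
  | .or A B  => A.DiaFree ∧ B.DiaFree
  | .imp A B => A.DiaFree ∧ B.DiaFree
  | .box A   => A.DiaFree
  | .dia _   => False

/-- No `□` occurs in the formula. -/
def Fml.BoxFree : Fml α → Prop
  | .atom _  => True
  | .top     => True
  | .bot     => True
  | .and A B => A.BoxFree ∧ B.BoxFree
  | .or A B  => A.BoxFree ∧ B.BoxFree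
  | .imp A B => A.BoxFree ∧ B.BoxFree
  | .box _   => False
  | .dia A   => A.BoxFree

/-- The formula is modality-free (propositional). -/
def Fml.ModFree : Fml α → Prop
  | .atom _  => True
  | .top     => True
  | .bot     => True
  | .and A B => A.ModFree ∧ B.ModFree
  | .or A B  => A.ModFree ∧ B.ModFree
  | .imp A B => A.ModFree ∧ B.ModFree
  | .box _   => False
  | .dia _   => False

/-- An angling of the language: an injection `φ ↦ ⟨φ⟩` from formulas into the
atoms whose image (the angled atoms) is disjoint from a fixed infinite set of
plain atoms. -/
structure Angling (α : Type) where
  angle : Fml α → α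
  plain : Set α
  inj : Function.Injective angle
  plain_infinite : plain.Infinite
  disjoint : ∀ φ : Fml α, angle φ ∉ plain

/-- `a` is an angled atom. -/
def Angling.Angled (S : Angling α) (a : α) : Prop := ∃ φ : Fml α, S.angle φ = a

/-- The translation `t`: `⊥^t = ⊥`, `p^t = ⟨p⟩`, `⊤^t = ⟨⊤⟩`,
`(A ∘ B)^t = (A^t ∘ B^t) ∧ ⟨A ∘ B⟩` and `(○A)^t = (○A^t) ∧ ⟨○A⟩`. -/
def Angling.tr (S : Angling α) : Fml α → Fml α
  | .atom a  => .atom (S.angle (.atom a))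
  | .top     => .atom (S.angle .top)
  | .bot     => .bot
  | .and A B => .and (.and (S.tr A) (S.tr B)) (.atom (S.angle (.and A B)))
  | .or A B  => .and (.or (S.tr A) (S.tr B)) (.atom (S.angle (.or A B)))
  | .imp A B => .and (.imp (S.tr A) (S.tr B)) (.atom (S.angle (.imp A B)))
  | .box A   => .and (.box (S.tr A)) (.atom (S.angle (.box A)))
  | .dia A   => .and (.dia (S.tr A)) (.atom (S.angle (.dia A)))

/-- Action of the standard substitution on atoms: an angled atom `⟨φ⟩` is sent
to `φ`; plain atoms are fixed. -/
noncomputable def Angling.stdAtom (S : Angling α) (a : α) : Fml α :=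
  haveI := Classical.propDecidable (∃ φ : Fml α, S.angle φ = a)
  if h : ∃ φ : Fml α, S.angle φ = a then h.choose else .atom a

/-- The standard substitution `s`: replaces each angled atom `⟨φ⟩` by `φ`,
fixes the plain atoms, and commutes with all connectives. -/
noncomputable def Angling.std (S : Angling α) : Fml α → Fml α :=
  Fml.subst S.stdAtom

/-- The Visser–Harrop property of a calculus. -/
def VisserHarrop (R : RuleSet α) : Prop :=
  ∀ (Γ : Multiset (Fml α)), (∀ A ∈ Γ, Harrop A) →
  ∀ (AB : List (Fml α × Fml α)) (C D : Fml α),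
    Derives R (Γ + imps AB) (some (.or C D)) →
    Derives R (Γ + imps AB) (some C) ∨
    Derives R (Γ + imps AB) (some D) ∨
    ∃ p ∈ AB, Derives R (Γ + imps AB) (some p.1)

/-- The disjunction property of a calculus. -/
def DisjProp (R : RuleSet α) : Prop :=
  ∀ C D : Fml α, Derives R 0 (some (.or C D)) →
    Derives R 0 (some C) ∨ Derives R 0 (some D)

/-- The formula interpretation `I(Γ ⇒ Δ) = ⋀Γ → ⋁Δ` belongs to `L` (stated for
every enumeration of the antecedent multiset as a list). -/
def interpIn (L : Set (Fml α)) (s : Seq α) : Prop :=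
  ∀ l : List (Fml α), (↑l : Multiset (Fml α)) = s.1 → Fml.imp (conj l) (odisj s.2) ∈ L

/- Named modal axioms (with `p := atom 0`, `q := atom 1`). -/
def axTa : Fml ℕ := .imp (.box (.atom 0)) (.atom 0)
def axTb : Fml ℕ := .imp (.atom 0) (.dia (.atom 0))
def axBa : Fml ℕ := .imp (.dia (.box (.atom 0))) (.atom 0)
def axBb : Fml ℕ := .imp (.atom 0) (.box (.dia (.atom 0)))
def ax4a : Fml ℕ := .imp (.box (.atom 0)) (.box (.box (.atom 0)))
def ax4b : Fml ℕ := .imp (.dia (.dia (.atom 0))) (.dia (.atom 0))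
def ax5a : Fml ℕ := .imp (.dia (.box (.atom 0))) (.box (.atom 0))
def ax5b : Fml ℕ := .imp (.dia (.atom 0)) (.box (.dia (.atom 0)))
def axDiaBot : Fml ℕ := .imp (.dia .bot) .bot
def axDiaOr : Fml ℕ :=
  .imp (.dia (.or (.atom 0) (.atom 1))) (.or (.dia (.atom 0)) (.dia (.atom 1)))
def axBoxImp : Fml ℕ :=
  .imp (.imp (.dia (.atom 0)) (.box (.atom 1))) (.box (.imp (.atom 0) (.atom 1)))

/-- The axioms of `X ⊆ {T, B, 4, 5}` in both their `a`- and `b`-versions. -/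
def XAxioms (tT tB t4 t5 : Bool) : Set (Fml ℕ) :=
  (if tT then ({axTa, axTb} : Set (Fml ℕ)) else ∅) ∪
  (if tB then ({axBa, axBb} : Set (Fml ℕ)) else ∅) ∪
  (if t4 then ({ax4a, ax4b} : Set (Fml ℕ)) else ∅) ∪
  (if t5 then ({ax5a, ax5b} : Set (Fml ℕ)) else ∅)

/-- The additional axioms of `IK` over `CK`. -/
def IKExtra : Set (Fml ℕ) := {axDiaBot, axDiaOr, axBoxImp}

/-- The right rule with premises `{Γ, φ̄_i ⇒ ψ̄_i}_{i∈I}` and conclusion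
`Γ, θ̄ ⇒ η̄`, closed under all substitutions of formulas for atoms and
multisets for the context `Γ`. -/
def rightRuleInst (prems : List (List (Fml α) × Option (Fml α)))
    (θ : List (Fml α)) (η : Option (Fml α)) : RuleSet α := fun ps c =>
  ∃ (σ : α → Fml α) (Γ : Multiset (Fml α)),
    ps = prems.map (fun pr =>
        ((Γ + ↑(pr.1.map (Fml.subst σ)) : Multiset (Fml α)), pr.2.map (Fml.subst σ))) ∧
    c = ((Γ + ↑(θ.map (Fml.subst σ)) : Multiset (Fml α)), η.map (Fml.subst σ))

/-- The left rule with premises `{Γ, φ̄_i ⇒ ψ̄_i}_{i∈I} ∪ {Γ, θ̄_j ⇒ Δ}_{j∈J}`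
and conclusion `Γ, η̄ ⇒ Δ`, closed under all substitutions of formulas for
atoms and multisets for `Γ` and `Δ`. -/
def leftRuleInst (prems : List (List (Fml α) × Option (Fml α)))
    (lefts : List (List (Fml α))) (η : List (Fml α)) : RuleSet α := fun ps c =>
  ∃ (σ : α → Fml α) (Γ : Multiset (Fml α)) (Δ : Option (Fml α)),
    ps = prems.map (fun pr =>
          ((Γ + ↑(pr.1.map (Fml.subst σ)) : Multiset (Fml α)), pr.2.map (Fml.subst σ)))
        ++ lefts.map (fun θj => ((Γ + ↑(θj.map (Fml.subst σ)) : Multiset (Fml α)), Δ)) ∧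
    c = ((Γ + ↑(η.map (Fml.subst σ)) : Multiset (Fml α)), Δ)

/-- The formula `Ax_R` of a right rule. -/
def AxRight (prems : List (List (Fml α) × Option (Fml α)))
    (θ : List (Fml α)) (η : Option (Fml α)) : Fml α :=
  .imp (.and (conj (prems.map fun pr => .imp (conj pr.1) (odisj pr.2))) (conj θ)) (odisj η)

/-- The formula `Ax_R` of a left rule. -/
def AxLeft (prems : List (List (Fml α) × Option (Fml α)))
    (lefts : List (List (Fml α))) (η : List (Fml α)) : Fml α :=
  .imp (.and (conj (prems.map fun pr => .imp (conj pr.1) (odisj pr.2))) (conj η))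
    (disj (lefts.map conj))

/-- The forgetful translation `f_i`: fixes atoms, `⊤`, `⊥`, commutes with
`∧`, `∨`, `→`, `□`, and sends every `◇A` to `⊥`. -/
def fi : Fml α → Fml α
  | .atom a  => .atom a
  | .top     => .top
  | .bot     => .bot
  | .and A B => .and (fi A) (fi B)
  | .or A B  => .or (fi A) (fi B)
  | .imp A B => .imp (fi A) (fi B)
  | .box A   => .box (fi A)
  | .dia _   => .bot

/-- The forgetful translation `f_r`: fixes atoms, `⊤`, `⊥`, commutes with
`∧`, `∨`, `→`, `□`, and sends `◇A` to `f_r A`. -/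
def fr : Fml α → Fml α
  | .atom a  => .atom a
  | .top     => .top
  | .bot     => .bot
  | .and A B => .and (fr A) (fr B)
  | .or A B  => .or (fr A) (fr B)
  | .imp A B => .imp (fr A) (fr B)
  | .box A   => .box (fr A)
  | .dia A   => fr A

section Helpers

variable {Ax : Fml ℕ → Prop}

private lemma dlj0 {Γ : Multiset (Fml ℕ)} {Δ : Option (Fml ℕ)}
    (hr : LJRule ([] : List (Seq ℕ)) (Γ, Δ)) : Derives (CKSys Ax) Γ Δ :=
  by
  refine Derives.step (R := CKSys Ax) (ps := []) (c := (Γ, Δ)) (Or.inl hr) ?_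
  intro p hp; cases hp

private lemma dlj1 {Γ₁ Γ : Multiset (Fml ℕ)} {Δ₁ Δ : Option (Fml ℕ)}
    (hr : LJRule [(Γ₁, Δ₁)] (Γ, Δ)) (h1 : Derives (CKSys Ax) Γ₁ Δ₁) :
    Derives (CKSys Ax) Γ Δ :=
  by
  refine Derives.step (R := CKSys Ax) (ps := [(Γ₁, Δ₁)]) (c := (Γ, Δ)) (Or.inl hr) ?_
  intro p hp
  cases hp with
  | head => exact h1
  | tail _ h => cases h

private lemma dlj2 {Γ₁ Γ₂ Γ : Multiset (Fml ℕ)} {Δ₁ Δ₂ Δ : Option (Fml ℕ)}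
    (hr : LJRule [(Γ₁, Δ₁), (Γ₂, Δ₂)] (Γ, Δ)) (h1 : Derives (CKSys Ax) Γ₁ Δ₁)
    (h2 : Derives (CKSys Ax) Γ₂ Δ₂) : Derives (CKSys Ax) Γ Δ :=
  by
  refine Derives.step (R := CKSys Ax) (ps := [(Γ₁, Δ₁), (Γ₂, Δ₂)]) (c := (Γ, Δ)) (Or.inl hr) ?_
  intro p hp
  rcases hp with _ | ⟨_, hp⟩
  · exact h1
  · cases hp with
    | head => exact h2
    | tail _ h => cases h

lemma dWeakCons (A : Fml ℕ) {Γ Δ} (h : Derives (CKSys Ax) Γ Δ) :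
    Derives (CKSys Ax) (A ::ₘ Γ) Δ := dlj1 (.wL A Γ Δ) h

lemma dWeak (S : Multiset (Fml ℕ)) {Γ Δ} (h : Derives (CKSys Ax) Γ Δ) :
    Derives (CKSys Ax) (S + Γ) Δ := by
  induction S using Multiset.induction with
  | empty => simpa using h
  | cons a s ih => rw [Multiset.cons_add]; exact dWeakCons a ih

lemma dMem {Γ : Multiset (Fml ℕ)} {A : Fml ℕ} (h : A ∈ Γ) :
    Derives (CKSys Ax) Γ (some A) := by
  obtain ⟨Γ', rfl⟩ := Multiset.exists_cons_of_mem h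
  exact dlj0 (.id Γ' A)

lemma dTop {Γ : Multiset (Fml ℕ)} : Derives (CKSys Ax) Γ (some .top) := dlj0 (.topR Γ)

lemma dCut {Γ Δ} {A : Fml ℕ} (h1 : Derives (CKSys Ax) Γ (some A))
    (h2 : Derives (CKSys Ax) (A ::ₘ Γ) Δ) : Derives (CKSys Ax) Γ Δ :=
  dlj2 (.cut A Γ Δ) h1 h2

lemma dBot {Γ Δ} (h : Derives (CKSys Ax) Γ (some .bot)) : Derives (CKSys Ax) Γ Δ :=
  dCut h (dlj0 (.botL Γ Δ))

lemma dMP {Γ} {A B : Fml ℕ} (h1 : Derives (CKSys Ax) Γ (some (.imp A B)))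
    (h2 : Derives (CKSys Ax) Γ (some A)) : Derives (CKSys Ax) Γ (some B) :=
  dCut h1 (dlj2 (.impL A B Γ (some B)) h2 (dlj0 (.id Γ B)))

lemma dAndE1 {Γ} {A B : Fml ℕ} (h : Derives (CKSys Ax) Γ (some (.and A B))) :
    Derives (CKSys Ax) Γ (some A) :=
  dCut h (dlj1 (.andL₁ A B Γ (some A)) (dlj0 (.id Γ A)))

lemma dAndE2 {Γ} {A B : Fml ℕ} (h : Derives (CKSys Ax) Γ (some (.and A B))) :
    Derives (CKSys Ax) Γ (some B) :=
  dCut h (dlj1 (.andL₂ A B Γ (some B)) (dlj0 (.id Γ B)))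

lemma dCutMany {T Δ} (S : Multiset (Fml ℕ)) (hS : ∀ A ∈ S, Derives (CKSys Ax) T (some A))
    (h : Derives (CKSys Ax) (T + S) Δ) : Derives (CKSys Ax) T Δ := by
  induction S using Multiset.induction with
  | empty => simpa using h
  | cons a s ih =>
    rw [Multiset.add_cons] at h
    have ha : Derives (CKSys Ax) (T + s) (some a) := by
      have := dWeak s (hS a (Multiset.mem_cons_self a s))
      rwa [add_comm] at this
    exact ih (fun A hA => hS A (Multiset.mem_cons_of_mem hA)) (dCut ha h)

lemma dCutAll {Γ T Δ} (h : Derives (CKSys Ax) Γ Δ)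
    (hΓ : ∀ A ∈ Γ, Derives (CKSys Ax) T (some A)) : Derives (CKSys Ax) T Δ :=
  dCutMany Γ hΓ (dWeak T h)

lemma dConj {T} (l : List (Fml ℕ)) (h : ∀ A ∈ l, Derives (CKSys Ax) T (some A)) :
    Derives (CKSys Ax) T (some (conj l)) := by
  induction l with
  | nil => exact dTop
  | cons a l ih =>
    cases l with
    | nil => exact h a (by simp)
    | cons b l' =>
      show Derives (CKSys Ax) T (some (.and a (conj (b :: l'))))
      exact dlj2 (.andR a (conj (b :: l')) T) (h a (by simp))
        (ih (fun A hA => h A (List.mem_cons_of_mem a hA)))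

lemma dConjElim (l : List (Fml ℕ)) {A : Fml ℕ} (h : A ∈ l) :
    Derives (CKSys Ax) (conj l ::ₘ 0) (some A) := by
  induction l with
  | nil => cases h
  | cons a l ih =>
    cases l with
    | nil =>
      rcases List.mem_singleton.mp h with rfl
      exact dlj0 (.id 0 A)
    | cons b l' =>
      show Derives (CKSys Ax) (Fml.and a (conj (b :: l')) ::ₘ 0) (some A)
      rcases List.mem_cons.mp h with rfl | h'
      · exact dlj1 (.andL₁ A (conj (b :: l')) 0 (some A)) (dlj0 (.id 0 A))
      · exact dlj1 (.andL₂ a (conj (b :: l')) 0 (some A)) (ih h')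

end Helpers
section Subst

variable {Ax : Fml ℕ → Prop}

lemma Fml.subst_subst (σ τ : ℕ → Fml ℕ) (A : Fml ℕ) :
    (A.subst τ).subst σ = A.subst (fun b => (τ b).subst σ) := by
  induction A <;> simp [Fml.subst, *]

/-- Substitution applied to a sequent. -/
def sSeq (σ : ℕ → Fml ℕ) (s : Seq ℕ) : Seq ℕ :=
  (s.1.map (Fml.subst σ), s.2.map (Fml.subst σ))

lemma LJRule.subst {ps : List (Seq ℕ)} {c : Seq ℕ} (σ : ℕ → Fml ℕ)
    (h : LJRule ps c) : LJRule (ps.map (sSeq σ)) (sSeq σ c) := by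
  cases h with
  | id Γ A => simpa [sSeq] using LJRule.id (Γ.map (Fml.subst σ)) (A.subst σ)
  | botL Γ Δ => simpa [sSeq, Fml.subst] using LJRule.botL (Γ.map (Fml.subst σ)) (Δ.map (Fml.subst σ))
  | topR Γ => simpa [sSeq, Fml.subst] using LJRule.topR (Γ.map (Fml.subst σ))
  | wL A Γ Δ => simpa [sSeq] using LJRule.wL (A.subst σ) (Γ.map (Fml.subst σ)) (Δ.map (Fml.subst σ))
  | wR A Γ => simpa [sSeq] using LJRule.wR (A.subst σ) (Γ.map (Fml.subst σ))
  | cL A Γ Δ => simpa [sSeq] using LJRule.cL (A.subst σ) (Γ.map (Fml.subst σ)) (Δ.map (Fml.subst σ))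
  | cut A Γ Δ => simpa [sSeq] using LJRule.cut (A.subst σ) (Γ.map (Fml.subst σ)) (Δ.map (Fml.subst σ))
  | andL₁ A B Γ Δ => simpa [sSeq, Fml.subst] using LJRule.andL₁ (A.subst σ) (B.subst σ) (Γ.map (Fml.subst σ)) (Δ.map (Fml.subst σ))
  | andL₂ A B Γ Δ => simpa [sSeq, Fml.subst] using LJRule.andL₂ (A.subst σ) (B.subst σ) (Γ.map (Fml.subst σ)) (Δ.map (Fml.subst σ))
  | andR A B Γ => simpa [sSeq, Fml.subst] using LJRule.andR (A.subst σ) (B.subst σ) (Γ.map (Fml.subst σ))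
  | orL A B Γ Δ => simpa [sSeq, Fml.subst] using LJRule.orL (A.subst σ) (B.subst σ) (Γ.map (Fml.subst σ)) (Δ.map (Fml.subst σ))
  | orR₁ A B Γ => simpa [sSeq, Fml.subst] using LJRule.orR₁ (A.subst σ) (B.subst σ) (Γ.map (Fml.subst σ))
  | orR₂ A B Γ => simpa [sSeq, Fml.subst] using LJRule.orR₂ (A.subst σ) (B.subst σ) (Γ.map (Fml.subst σ))
  | impL A B Γ Δ => simpa [sSeq, Fml.subst] using LJRule.impL (A.subst σ) (B.subst σ) (Γ.map (Fml.subst σ)) (Δ.map (Fml.subst σ))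
  | impR A B Γ => simpa [sSeq, Fml.subst] using LJRule.impR (A.subst σ) (B.subst σ) (Γ.map (Fml.subst σ))

lemma CKSys.subst {ps : List (Seq ℕ)} {c : Seq ℕ} (σ : ℕ → Fml ℕ)
    (h : CKSys Ax ps c) : CKSys Ax (ps.map (sSeq σ)) (sSeq σ c) := by
  rcases h with h | h | h | h
  · exact Or.inl (h.subst σ)
  · refine Or.inr (Or.inl ?_)
    cases h with
    | mk Γ A =>
      simpa [sSeq, Fml.subst, Multiset.map_map, Function.comp_def] using   KBoxRule.mk (Γ.map (Fml.subst σ)) (A.subst σ)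
  · refine Or.inr (Or.inr (Or.inl ?_))
    cases h with
    | mk Γ A B =>
      simpa [sSeq, Fml.subst, Multiset.map_map, Function.comp_def] using   KDiaRule.mk (Γ.map (Fml.subst σ)) (A.subst σ) (B.subst σ)
  · obtain ⟨rfl, A, τ, hA, rfl⟩ := h
    exact Or.inr (Or.inr (Or.inr ⟨rfl, A, fun b => (τ b).subst σ, hA, by
      simp [sSeq, Fml.subst_subst]⟩))

lemma dSubst {Γ Δ} (σ : ℕ → Fml ℕ) (h : Derives (CKSys Ax) Γ Δ) :
    Derives (CKSys Ax) (Γ.map (Fml.subst σ)) (Δ.map (Fml.subst σ)) := by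
  induction h with
  | @step ps c hr hp ih =>
    refine Derives.step (R := CKSys Ax) (ps := ps.map (sSeq σ)) (c := sSeq σ c)
      (CKSys.subst σ hr) ?_
    intro p hp'
    obtain ⟨q, hq, rfl⟩ := List.mem_map.mp hp'
    exact ih q hq

lemma evalI_subst (v : ℕ → Bool) (σ : ℕ → Fml ℕ) (A : Fml ℕ) :
    evalI v (A.subst σ) = evalI (fun a => evalI v (σ a)) A := by
  induction A <;> simp [Fml.subst, evalI, *]

lemma evalR_subst (v : ℕ → Bool) (σ : ℕ → Fml ℕ) (A : Fml ℕ) :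
    evalR v (A.subst σ) = evalR (fun a => evalR v (σ a)) A := by
  induction A <;> simp [Fml.subst, evalR, *]

end Subst
section Slash

/-- The (Aczel-style) slash relation relative to a theory `T`, with a flag
`refl` distinguishing the T-full (`true`) and T-free (`false`) cases. -/
def Slash (Ax : Fml ℕ → Prop) (refl : Bool) (T : Multiset (Fml ℕ)) : Fml ℕ → Prop
  | .atom a => Derives (CKSys Ax) T (some (.atom a))
  | .top => True
  | .bot => Derives (CKSys Ax) T (some .bot)
  | .and A B => Slash Ax refl T A ∧ Slash Ax refl T B
  | .or A B => Slash Ax refl T A ∨ Slash Ax refl T B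
  | .imp A B => Derives (CKSys Ax) T (some (.imp A B)) ∧ (Slash Ax refl T A → Slash Ax refl T B)
  | .box A => Derives (CKSys Ax) T (some (.box A)) ∧ (refl = true → Slash Ax refl T A)
  | .dia A => Derives (CKSys Ax) T (some (.dia A)) ∧
      (if refl then Slash Ax refl T A else Derives (CKSys Ax) T (some .bot))

/-- Slash for succedents. -/
def SlashOpt (Ax : Fml ℕ → Prop) (refl : Bool) (T : Multiset (Fml ℕ)) :
    Option (Fml ℕ) → Prop
  | none => Derives (CKSys Ax) T (some .bot)
  | some A => Slash Ax refl T A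

variable {Ax : Fml ℕ → Prop} {refl : Bool} {T : Multiset (Fml ℕ)}

lemma slashSound : ∀ {A : Fml ℕ}, Slash Ax refl T A → Derives (CKSys Ax) T (some A)
  | .atom _, h => h
  | .top, _ => dTop
  | .bot, h => h
  | .and _ _, h => dlj2 (.andR _ _ T) (slashSound h.1) (slashSound h.2)
  | .or A B, h => h.elim (fun h1 => dlj1 (.orR₁ A B T) (slashSound h1))
      (fun h2 => dlj1 (.orR₂ A B T) (slashSound h2))
  | .imp _ _, h => h.1
  | .box _, h => h.1
  | .dia _, h => h.1

lemma slashExplode (hbot : Derives (CKSys Ax) T (some .bot)) (A : Fml ℕ) :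
    Slash Ax refl T A := by
  induction A with
  | atom a => exact dBot hbot
  | top => trivial
  | bot => exact hbot
  | and A B ihA ihB => exact ⟨ihA, ihB⟩
  | or A B ihA ihB => exact Or.inl ihA
  | imp A B ihA ihB => exact ⟨dBot hbot, fun _ => ihB⟩
  | box A ihA => exact ⟨dBot hbot, fun _ => ihA⟩
  | dia A ihA =>
    refine ⟨dBot hbot, ?_⟩
    split
    · exact ihA
    · exact hbot

lemma slashOptExplode (hbot : Derives (CKSys Ax) T (some .bot)) (Δ : Option (Fml ℕ)) :
    SlashOpt Ax refl T Δ := by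
  cases Δ with
  | none => exact hbot
  | some A => exact slashExplode hbot A

/-- Main lemma: every derivable sequent is slash-valid, provided all axiom
instances are slashed. -/
theorem slash_main {Γ Δ} (hax : ∀ A, Ax A → ∀ σ : ℕ → Fml ℕ, Slash Ax refl T (A.subst σ))
    (hd : Derives (CKSys Ax) Γ Δ) :
    (∀ A ∈ Γ, Slash Ax refl T A) → SlashOpt Ax refl T Δ := by
  induction hd with
  | @step ps c hr hp ih =>
    rcases hr with hr | hr | hr | hr
    · cases hr with
      | id Γ A => exact fun hΓ => hΓ A (Multiset.mem_cons_self A Γ)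
      | botL Γ Δ => exact fun hΓ => slashOptExplode (hΓ .bot (Multiset.mem_cons_self _ Γ)) Δ
      | topR Γ => exact fun _ => trivial
      | wL A Γ Δ =>
        exact fun hΓ => ih (Γ, Δ) (by simp) (fun X hX => hΓ X (Multiset.mem_cons_of_mem hX))
      | wR A Γ =>
        exact fun hΓ => slashExplode (ih (Γ, none) (by simp) hΓ) A
      | cL A Γ Δ =>
        intro hΓ
        refine ih (A ::ₘ A ::ₘ Γ, Δ) (by simp) ?_
        intro X hX
        rcases Multiset.mem_cons.mp hX with rfl | hX
        · exact hΓ X (Multiset.mem_cons_self X Γ)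
        · exact hΓ X hX
      | cut A Γ Δ =>
        intro hΓ
        have hA : Slash Ax refl T A := ih (Γ, some A) (by simp) hΓ
        refine ih (A ::ₘ Γ, Δ) (by simp) ?_
        intro X hX
        rcases Multiset.mem_cons.mp hX with rfl | hX
        · exact hA
        · exact hΓ X hX
      | andL₁ A B Γ Δ =>
        intro hΓ
        have hAB := hΓ (.and A B) (Multiset.mem_cons_self _ Γ)
        refine ih (A ::ₘ Γ, Δ) (by simp) ?_
        intro X hX
        rcases Multiset.mem_cons.mp hX with rfl | hX
        · exact hAB.1
        · exact hΓ X (Multiset.mem_cons_of_mem hX)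
      | andL₂ A B Γ Δ =>
        intro hΓ
        have hAB := hΓ (.and A B) (Multiset.mem_cons_self _ Γ)
        refine ih (B ::ₘ Γ, Δ) (by simp) ?_
        intro X hX
        rcases Multiset.mem_cons.mp hX with rfl | hX
        · exact hAB.2
        · exact hΓ X (Multiset.mem_cons_of_mem hX)
      | andR A B Γ =>
        exact fun hΓ => ⟨ih (Γ, some A) (by simp) hΓ, ih (Γ, some B) (by simp) hΓ⟩
      | orL A B Γ Δ =>
        intro hΓ
        have hrest : ∀ X ∈ Γ, Slash Ax refl T X :=
          fun X hX => hΓ X (Multiset.mem_cons_of_mem hX)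
        rcases hΓ (.or A B) (Multiset.mem_cons_self _ Γ) with h | h
        · refine ih (A ::ₘ Γ, Δ) (by simp) ?_
          intro X hX
          rcases Multiset.mem_cons.mp hX with rfl | hX
          exacts [h, hrest X hX]
        · refine ih (B ::ₘ Γ, Δ) (by simp) ?_
          intro X hX
          rcases Multiset.mem_cons.mp hX with rfl | hX
          exacts [h, hrest X hX]
      | orR₁ A B Γ => exact fun hΓ => Or.inl (ih (Γ, some A) (by simp) hΓ)
      | orR₂ A B Γ => exact fun hΓ => Or.inr (ih (Γ, some B) (by simp) hΓ)
      | impL A B Γ Δ =>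
        intro hΓ
        have hrest : ∀ X ∈ Γ, Slash Ax refl T X :=
          fun X hX => hΓ X (Multiset.mem_cons_of_mem hX)
        have himp := hΓ (.imp A B) (Multiset.mem_cons_self _ Γ)
        have hA : Slash Ax refl T A := ih (Γ, some A) (by simp) hrest
        have hB : Slash Ax refl T B := himp.2 hA
        refine ih (B ::ₘ Γ, Δ) (by simp) ?_
        intro X hX
        rcases Multiset.mem_cons.mp hX with rfl | hX
        exacts [hB, hrest X hX]
      | impR A B Γ =>
        intro hΓ
        have hder : Derives (CKSys Ax) Γ (some (.imp A B)) :=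
          Derives.step (R := CKSys Ax) (c := (Γ, some (.imp A B)))
            (Or.inl (LJRule.impR A B Γ)) hp
        refine ⟨dCutAll hder (fun X hX => slashSound (hΓ X hX)), fun hA => ?_⟩
        refine ih (A ::ₘ Γ, some B) (by simp) ?_
        intro X hX
        rcases Multiset.mem_cons.mp hX with rfl | hX
        exacts [hA, hΓ X hX]
    · cases hr with
      | mk Γ A =>
        intro hΓ
        have hder : Derives (CKSys Ax) (Γ.map Fml.box) (some (.box A)) :=
          Derives.step (R := CKSys Ax) (c := (Γ.map Fml.box, some (.box A)))
            (Or.inr (Or.inl (KBoxRule.mk Γ A))) hp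
        refine ⟨dCutAll hder (fun X hX => slashSound (hΓ X hX)), fun hrefl => ?_⟩
        refine ih (Γ, some A) (by simp) ?_
        intro X hX
        exact (hΓ (.box X) (Multiset.mem_map_of_mem Fml.box hX)).2 hrefl
    · cases hr with
      | mk Γ A B =>
        intro hΓ
        have hder : Derives (CKSys Ax) (.dia A ::ₘ Γ.map Fml.box) (some (.dia B)) :=
          Derives.step (R := CKSys Ax) (c := (.dia A ::ₘ Γ.map Fml.box, some (.dia B)))
            (Or.inr (Or.inr (Or.inl (KDiaRule.mk Γ A B)))) hp
        have hdia := hΓ (.dia A) (Multiset.mem_cons_self _ _)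
        refine ⟨dCutAll hder (fun X hX => slashSound (hΓ X hX)), ?_⟩
        cases refl with
        | false => simpa using hdia.2
        | true =>
          simp only [if_true]
          have hA : Slash Ax true T A := by simpa using hdia.2
          refine ih (A ::ₘ Γ, some B) (by simp) ?_
          intro X hX
          rcases Multiset.mem_cons.mp hX with rfl | hX
          · exact hA
          · exact (hΓ (.box X)
              (Multiset.mem_cons_of_mem (Multiset.mem_map_of_mem Fml.box hX))).2 rfl
    · obtain ⟨rfl, A, σ, hA, rfl⟩ := hr
      exact fun _ => hax A hA σ

end Slash
section Semantics

/-- Uniform one-node evaluation: reflexive if `refl = true`, irreflexive otherwise. -/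
def evalM : Bool → (ℕ → Bool) → Fml ℕ → Bool
  | true, v, A => evalR v A
  | false, v, A => evalI v A

@[simp] lemma evalM_atom (r : Bool) (v : ℕ → Bool) (a : ℕ) :
    evalM r v (.atom a) = v a := by cases r <;> rfl
@[simp] lemma evalM_top (r : Bool) (v : ℕ → Bool) : evalM r v .top = true := by
  cases r <;> rfl
@[simp] lemma evalM_bot (r : Bool) (v : ℕ → Bool) : evalM r v .bot = false := by
  cases r <;> rfl
@[simp] lemma evalM_and (r : Bool) (v : ℕ → Bool) (A B : Fml ℕ) :
    evalM r v (.and A B) = (evalM r v A && evalM r v B) := by cases r <;> rfl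
@[simp] lemma evalM_or (r : Bool) (v : ℕ → Bool) (A B : Fml ℕ) :
    evalM r v (.or A B) = (evalM r v A || evalM r v B) := by cases r <;> rfl
@[simp] lemma evalM_imp (r : Bool) (v : ℕ → Bool) (A B : Fml ℕ) :
    evalM r v (.imp A B) = (!evalM r v A || evalM r v B) := by cases r <;> rfl
@[simp] lemma evalM_box (r : Bool) (v : ℕ → Bool) (A : Fml ℕ) :
    evalM r v (.box A) = (if r then evalM r v A else true) := by cases r <;> rfl
@[simp] lemma evalM_dia (r : Bool) (v : ℕ → Bool) (A : Fml ℕ) :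
    evalM r v (.dia A) = (if r then evalM r v A else false) := by cases r <;> rfl

lemma evalM_subst (r : Bool) (v : ℕ → Bool) (σ : ℕ → Fml ℕ) (A : Fml ℕ) :
    evalM r v (A.subst σ) = evalM r (fun a => evalM r v (σ a)) A := by
  cases r
  · exact evalI_subst v σ A
  · exact evalR_subst v σ A

/-- The canonical valuation induced by the slash relation and a substitution. -/
noncomputable def wv (Ax : Fml ℕ → Prop) (refl : Bool) (T : Multiset (Fml ℕ))
    (σ : ℕ → Fml ℕ) (a : ℕ) : Bool :=
  @decide (Slash Ax refl T (σ a)) (Classical.propDecidable _)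

lemma wv_iff {Ax : Fml ℕ → Prop} {refl : Bool} {T : Multiset (Fml ℕ)}
    {σ : ℕ → Fml ℕ} {a : ℕ} :
    wv Ax refl T σ a = true ↔ Slash Ax refl T (σ a) :=
  @decide_eq_true_iff _ (Classical.propDecidable _)

variable {Ax : Fml ℕ → Prop} {refl : Bool} {T : Multiset (Fml ℕ)} {σ : ℕ → Fml ℕ}


lemma dOfEmpty {Δ} (h : Derives (CKSys Ax) 0 Δ) : Derives (CKSys Ax) T Δ := by
  simpa using dWeak T h

lemma basic_iff (hcon : ¬ Derives (CKSys Ax) T (some .bot))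
    (hdiaax : refl = true → ∀ X : Fml ℕ, Derives (CKSys Ax) 0 (some (.imp X (.dia X))))
    {B : Fml ℕ} (hB : Basic B) :
    Slash Ax refl T (B.subst σ) ↔ evalM refl (wv Ax refl T σ) B = true := by
  induction hB with
  | atom a => simpa [Fml.subst] using wv_iff.symm
  | top => simp [Fml.subst, Slash]
  | bot =>
    simp only [Fml.subst, evalM_bot]
    constructor
    · exact fun h => absurd h hcon
    · intro h; cases h
  | and hA hB ihA ihB => simp [Fml.subst, Slash, ihA, ihB]
  | or hA hB ihA ihB => simp [Fml.subst, Slash, ihA, ihB]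
  | @dia A hA ihA =>
    show Slash Ax refl T (.dia (A.subst σ)) ↔ _
    cases refl with
    | false => simp [Slash, hcon]
    | true =>
      simp only [Slash, evalM_dia, if_true]
      constructor
      · exact fun h => ihA.mp h.2
      · intro h
        have hs : Slash Ax true T (A.subst σ) := ihA.mpr h
        exact ⟨dMP (dOfEmpty (hdiaax rfl (A.subst σ))) (slashSound hs), hs⟩

lemma ap_eval (hcon : ¬ Derives (CKSys Ax) T (some .bot))
    (hdiaax : refl = true → ∀ X : Fml ℕ, Derives (CKSys Ax) 0 (some (.imp X (.dia X))))
    {A : Fml ℕ} (hA : AlmostPos A) :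
    Slash Ax refl T (A.subst σ) → evalM refl (wv Ax refl T σ) A = true := by
  induction hA with
  | basic hB => exact (basic_iff hcon hdiaax hB).mp
  | and hA hB ihA ihB =>
    intro h
    simp only [Fml.subst] at h
    simp [ihA h.1, ihB h.2]
  | or hA hB ihA ihB =>
    intro h
    simp only [Fml.subst] at h
    rcases h with h | h
    · simp [ihA h]
    · simp [ihB h]
  | box hA ihA =>
    intro h
    simp only [Fml.subst] at h
    cases refl with
    | false => simp
    | true => simp [ihA (h.2 rfl)]
  | dia hA ihA =>
    intro h
    simp only [Fml.subst] at h
    cases refl with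
    | false => exact absurd (by simpa using h.2) hcon
    | true => simpa using ihA (by simpa using h.2)
  | @imp A' B' hB hA ihA =>
    intro h
    simp only [Fml.subst] at h
    simp only [evalM_imp, Bool.or_eq_true, Bool.not_eq_true']
    by_cases hb : evalM refl (wv Ax refl T σ) A' = true
    · exact Or.inr (ihA (h.2 ((basic_iff hcon hdiaax hB).mpr hb)))
    · exact Or.inl (Bool.not_eq_true _ ▸ hb)

lemma constr_slash (hcon : ¬ Derives (CKSys Ax) T (some .bot))
    (hboxax : refl = true → ∀ X : Fml ℕ, Derives (CKSys Ax) 0 (some (.imp (.box X) X)))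
    (hdiaax : refl = true → ∀ X : Fml ℕ, Derives (CKSys Ax) 0 (some (.imp X (.dia X))))
    {C : Fml ℕ} (hC : Constructive C) :
    Derives (CKSys Ax) T (some (C.subst σ)) →
    evalM refl (wv Ax refl T σ) C = true → Slash Ax refl T (C.subst σ) := by
  induction hC with
  | basic hB => exact fun _ h => (basic_iff hcon hdiaax hB).mpr h
  | and h1 h2 ih1 ih2 =>
    intro hp he
    simp only [evalM_and, Bool.and_eq_true] at he
    exact ⟨ih1 (dAndE1 hp) he.1, ih2 (dAndE2 hp) he.2⟩
  | box hC ih =>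
    intro hp he
    refine ⟨hp, fun hrefl => ?_⟩
    subst hrefl
    simp only [evalM_box, if_true] at he
    exact ih (dMP (dOfEmpty (hboxax rfl _)) hp) he
  | imp hA hC ih =>
    intro hp he
    refine ⟨hp, fun hs => ?_⟩
    have hea := ap_eval hcon hdiaax hA hs
    simp only [evalM_imp, Bool.or_eq_true, Bool.not_eq_true', hea] at he
    simp only [Bool.true_eq_false, false_or] at he
    exact ih (dMP hp (slashSound hs)) he

end Semantics
section Final

variable {Ax : Fml ℕ → Prop} {refl : Bool} {T : Multiset (Fml ℕ)}

lemma ax_slash (hconstr : ∀ A, Ax A → Constructive A)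
    (hvalid : ∀ (Γ : Multiset (Fml ℕ)) (Δ : Option (Fml ℕ)),
      Derives (CKSys Ax) Γ Δ → SeqValid (evalM refl) Γ Δ)
    (hcon : ¬ Derives (CKSys Ax) T (some .bot))
    (hboxax : refl = true → ∀ X : Fml ℕ, Derives (CKSys Ax) 0 (some (.imp (.box X) X)))
    (hdiaax : refl = true → ∀ X : Fml ℕ, Derives (CKSys Ax) 0 (some (.imp X (.dia X)))) :
    ∀ A, Ax A → ∀ σ : ℕ → Fml ℕ, Slash Ax refl T (A.subst σ) := by
  intro A hA σ
  have hax0 : ∀ τ : ℕ → Fml ℕ, Derives (CKSys Ax) 0 (some (A.subst τ)) := by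
    intro τ
    refine Derives.step (R := CKSys Ax) (ps := []) (c := (0, some (A.subst τ)))
      (Or.inr (Or.inr (Or.inr ⟨rfl, A, τ, hA, rfl⟩))) ?_
    intro p hp; cases hp
  have hev : evalM refl (wv Ax refl T σ) A = true := by
    set τ : ℕ → Fml ℕ := fun a => if wv Ax refl T σ a then Fml.top else Fml.bot with hτ
    obtain ⟨B, hB, hBe⟩ := hvalid 0 (some (A.subst τ)) (hax0 τ) (fun _ => true) (by simp)
    rw [Option.mem_def] at hB
    obtain rfl : A.subst τ = B := by injection hB
    rw [evalM_subst] at hBe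
    have hw : (fun a => evalM refl (fun _ => true) (τ a)) = wv Ax refl T σ := by
      funext a
      cases h : wv Ax refl T σ a <;> simp [hτ, h]
    rwa [hw] at hBe
  exact constr_slash hcon hboxax hdiaax (hconstr A hA) (dOfEmpty (hax0 σ)) hev

end Final
/-- Let `𝒞` be a finite set of constructive formulas and let
`G = CK+𝒞` be either T-free or T-full.  Then the logic of `G` admits all
Visser's rules; in particular `G` has the disjunction property. -/
theorem statement_1 (CS : Finset (Fml ℕ)) (hCS : ∀ A ∈ CS, Constructive A)
    (hTF : TFree (· ∈ CS) ∨ TFull (· ∈ CS)) :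
    (∀ (AB : List (Fml ℕ × Fml ℕ)) (C D : Fml ℕ),
      Derives (CKSys (· ∈ CS)) 0 (some (.imp (impConj AB) (.or C D))) →
      Derives (CKSys (· ∈ CS)) 0 (some (.imp (impConj AB) C)) ∨
      Derives (CKSys (· ∈ CS)) 0 (some (.imp (impConj AB) D)) ∨
      ∃ p ∈ AB, Derives (CKSys (· ∈ CS)) 0 (some (.imp (impConj AB) p.1))) ∧
    (∀ C D : Fml ℕ,
      Derives (CKSys (· ∈ CS)) 0 (some (.or C D)) →
      Derives (CKSys (· ∈ CS)) 0 (some C) ∨ Derives (CKSys (· ∈ CS)) 0 (some D)) := by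
  have main : ∀ (AB : List (Fml ℕ × Fml ℕ)) (C D : Fml ℕ),
      Derives (CKSys (· ∈ CS)) 0 (some (.imp (impConj AB) (.or C D))) →
      Derives (CKSys (· ∈ CS)) 0 (some (.imp (impConj AB) C)) ∨
      Derives (CKSys (· ∈ CS)) 0 (some (.imp (impConj AB) D)) ∨
      ∃ p ∈ AB, Derives (CKSys (· ∈ CS)) 0 (some (.imp (impConj AB) p.1)) := by
    intro AB C D hd
    set T : Multiset (Fml ℕ) := imps AB with hTdef
    have hmemT : ∀ p ∈ AB, (Fml.imp p.1 p.2) ∈ T := by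
      intro p hp
      rw [hTdef]
      exact Multiset.mem_coe.mpr (List.mem_map_of_mem hp)
    -- `T ⊢ ⋀(A_i → B_i)`
    have hTconj : Derives (CKSys (· ∈ CS)) T (some (impConj AB)) := by
      refine dConj _ ?_
      intro X hX
      exact dMem (Multiset.mem_coe.mpr hX)
    -- `T ⊢ C ∨ D`
    have hCD : Derives (CKSys (· ∈ CS)) T (some (.or C D)) :=
      dMP (dOfEmpty hd) hTconj
    -- back-translation from `T ⊢ X` to `⊢ ⋀(A_i → B_i) → X`
    have back : ∀ X : Fml ℕ, Derives (CKSys (· ∈ CS)) T (some X) →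
        Derives (CKSys (· ∈ CS)) 0 (some (.imp (impConj AB) X)) := by
      intro X hX
      have h2 : Derives (CKSys (· ∈ CS)) (impConj AB ::ₘ 0) (some X) := by
        refine dCutAll hX ?_
        intro Y hY
        rw [hTdef] at hY
        exact dConjElim _ (Multiset.mem_coe.mp hY)
      exact dlj1 (.impR (impConj AB) X 0) h2
    by_cases hcon : Derives (CKSys (· ∈ CS)) T (some .bot)
    · exact Or.inl (back C (dBot hcon))
    · -- choose the frame flag and semantic data
      obtain ⟨refl, hvalid, hboxax, hdiaax⟩ :
          ∃ refl : Bool,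
            (∀ (Γ : Multiset (Fml ℕ)) (Δ : Option (Fml ℕ)),
              Derives (CKSys (· ∈ CS)) Γ Δ → SeqValid (evalM refl) Γ Δ) ∧
            (refl = true → ∀ X : Fml ℕ,
              Derives (CKSys (· ∈ CS)) 0 (some (.imp (.box X) X))) ∧
            (refl = true → ∀ X : Fml ℕ,
              Derives (CKSys (· ∈ CS)) 0 (some (.imp X (.dia X)))) := by
        rcases hTF with hfree | hfull
        · exact ⟨false, hfree, fun h => absurd h (by simp), fun h => absurd h (by simp)⟩
        · refine ⟨true, hfull.1, fun _ X => ?_, fun _ X => ?_⟩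
          · have := dSubst (fun _ => X) (hfull.2.1 0)
            simpa [Fml.subst] using this
          · have := dSubst (fun _ => X) (hfull.2.2 0)
            simpa [Fml.subst] using this
      have hax := ax_slash (T := T) hCS hvalid hcon hboxax hdiaax
      by_cases hall : ∀ p ∈ AB, Slash (· ∈ CS) refl T (.imp p.1 p.2)
      · have hS : Slash (· ∈ CS) refl T (.or C D) := by
          refine slash_main hax hCD ?_
          intro X hX
          rw [hTdef] at hX
          obtain ⟨p, hp, rfl⟩ := List.mem_map.mp (Multiset.mem_coe.mp hX)
          exact hall p hp
        rcases (hS : Slash (· ∈ CS) refl T C ∨ Slash (· ∈ CS) refl T D) with h | h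
        · exact Or.inl (back C (slashSound h))
        · exact Or.inr (Or.inl (back D (slashSound h)))
      · push_neg at hall
        obtain ⟨p, hp, hn⟩ := hall
        have hprov : Derives (CKSys (· ∈ CS)) T (some (.imp p.1 p.2)) :=
          dMem (hmemT p hp)
        have h1 : Slash (· ∈ CS) refl T p.1 := by
          by_contra h
          exact hn ⟨hprov, fun hx => absurd hx h⟩
        exact Or.inr (Or.inr ⟨p, hp, back p.1 (slashSound h1)⟩)
  refine ⟨main, ?_⟩
  intro C D hd
  have h0 : Derives (CKSys (· ∈ CS)) 0 (some (.imp (impConj []) (.or C D))) :=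
    dlj1 (.impR (impConj []) (.or C D) 0) (dWeakCons _ hd)
  rcases main [] C D h0 with h | h | ⟨p, hp, _⟩
  · exact Or.inl (dMP h dTop)
  · exact Or.inr (dMP h dTop)
  · cases hp
end UPT
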